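/- Let E, e, λ ∈ ℝ with E < 0, e ≠ 0, and 0 < λ ≤ e^2/√(-2E), and set r∓ = (e^2 ∓ √(e^4 + 2Eλ^2))/(-2E). Then ∫_{r₋}^{r₊} √(2E + 2e^2/r - λ^2/r^2) dr = π ( e^2/√(-2E) - λ ). -/

import Mathlib

open Real Set

lemma sqrt_poly_integral (a b : ℝ) (ha : 0 < a) (hab : a < b) :
    ∫ x in a..b, Real.sqrt ((x - a) * (b - x)) / x
      = Real.pi * ((a + b) / 2 - Real.sqrt (a * b)) := by
  have hb : 0 < b := ha.trans hab
  have hd : 0 < b - a := by linarith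
  set F : ℝ → ℝ := fun x =>
    Real.sqrt ((x - a) * (b - x))
      + (a + b) / 2 * Real.arcsin ((2 * x - (a + b)) / (b - a))
      - Real.sqrt (a * b) * Real.arcsin (((a + b) * x - 2 * (a * b)) / ((b - a) * x)) with hF
  have hcont : ContinuousOn F (Set.Icc a b) := by
    apply ContinuousOn.sub
    · apply ContinuousOn.add
      · exact (Real.continuous_sqrt.comp (by continuity)).continuousOn
      · apply ContinuousOn.mul continuousOn_const
        exact Real.continuous_arcsin.comp_continuousOn (by fun_prop)
    · apply ContinuousOn.mul continuousOn_const
      apply Real.continuous_arcsin.comp_continuousOn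
      apply ContinuousOn.div (by fun_prop) (by fun_prop)
      intro x hx
      have : 0 < x := lt_of_lt_of_le ha hx.1
      positivity
  have hint : IntervalIntegrable (fun x => Real.sqrt ((x - a) * (b - x)) / x)
      MeasureTheory.volume a b := by
    apply ContinuousOn.intervalIntegrable
    apply ContinuousOn.div (by fun_prop) continuousOn_id
    intro x hx
    rw [Set.uIcc_of_le hab.le] at hx
    exact (lt_of_lt_of_le ha hx.1).ne'
  have hderiv : ∀ x ∈ Set.Ioo a b,
      HasDerivAt F (Real.sqrt ((x - a) * (b - x)) / x) x := by
    intro x hx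
    obtain ⟨hax, hxb⟩ := hx
    have hx0 : 0 < x := ha.trans hax
    have hQ : 0 < (x - a) * (b - x) := mul_pos (by linarith) (by linarith)
    set q := Real.sqrt ((x - a) * (b - x)) with hq
    have hqpos : 0 < q := Real.sqrt_pos.mpr hQ
    have hq2 : q ^ 2 = (x - a) * (b - x) := Real.sq_sqrt hQ.le
    set p := Real.sqrt (a * b) with hp
    have hppos : 0 < p := Real.sqrt_pos.mpr (mul_pos ha hb)
    have hp2 : p ^ 2 = a * b := Real.sq_sqrt (mul_pos ha hb).le
    -- first term
    have hg : HasDerivAt (fun x => (x - a) * (b - x)) (a + b - 2 * x) x := by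
      have := (((hasDerivAt_id x).sub_const a).mul
        ((hasDerivAt_const x b).sub (hasDerivAt_id x)))
      convert this using 1
      · rfl
      · rfl
      · rfl
      simp only [id_eq, Pi.sub_apply]
      ring
    have h1 : HasDerivAt (fun y => Real.sqrt ((y - a) * (b - y)))
        ((a + b - 2 * x) / (2 * q)) x := by
      have := (Real.hasDerivAt_sqrt hQ.ne').comp x hg
      convert this using 1
      · rfl
      · rfl
      · rfl
      rw [← hq]
      ring
    -- second term : arcsin v
    have hv1 : (2 * x - (a + b)) / (b - a) ≠ -1 := by
      intro h; rw [div_eq_iff hd.ne'] at h; nlinarith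
    have hv2 : (2 * x - (a + b)) / (b - a) ≠ 1 := by
      intro h; rw [div_eq_iff hd.ne'] at h; nlinarith
    have hvin : HasDerivAt (fun y => (2 * y - (a + b)) / (b - a)) (2 / (b - a)) x := by
      have := (((hasDerivAt_id x).const_mul 2).sub_const (a + b)).div_const (b - a)
      convert this using 1
      · rfl
      · rfl
      · rfl
      ring
    have h2 : HasDerivAt (fun y => Real.arcsin ((2 * y - (a + b)) / (b - a)))
        (1 / Real.sqrt (1 - ((2 * x - (a + b)) / (b - a)) ^ 2) * (2 / (b - a))) x :=
      (Real.hasDerivAt_arcsin hv1 hv2).comp x hvin (h₂ := Real.arcsin)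
    -- third term : arcsin u
    have hden : (b - a) * x ≠ 0 := by positivity
    have hu1 : ((a + b) * x - 2 * (a * b)) / ((b - a) * x) ≠ -1 := by
      intro h; rw [div_eq_iff hden] at h; nlinarith
    have hu2 : ((a + b) * x - 2 * (a * b)) / ((b - a) * x) ≠ 1 := by
      intro h; rw [div_eq_iff hden] at h; nlinarith
    have huin : HasDerivAt (fun y => ((a + b) * y - 2 * (a * b)) / ((b - a) * y))
        (2 * (a * b) / ((b - a) * x ^ 2)) x := by
      have hf : HasDerivAt (fun y => (a + b) * y - 2 * (a * b)) (a + b) x := by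
        have := (((hasDerivAt_id x).const_mul (a + b)).sub_const (2 * (a * b)))
        convert this using 1
        · rfl
        · rfl
        · rfl
        ring
      have hgd : HasDerivAt (fun y => (b - a) * y) (b - a) x := by
        have := (hasDerivAt_id x).const_mul (b - a)
        convert this using 1
        · rfl
        · rfl
        · rfl
        ring
      have := hf.div hgd hden
      convert this using 1
      · rfl
      · rfl
      · rfl
      field_simp
      ring
    have h3 : HasDerivAt (fun y => Real.arcsin (((a + b) * y - 2 * (a * b)) / ((b - a) * y)))
        (1 / Real.sqrt (1 - (((a + b) * x - 2 * (a * b)) / ((b - a) * x)) ^ 2)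
          * (2 * (a * b) / ((b - a) * x ^ 2))) x :=
      (Real.hasDerivAt_arcsin hu1 hu2).comp x huin (h₂ := Real.arcsin)
    -- combine
    have H := (h1.add (h2.const_mul ((a + b) / 2))).sub (h3.const_mul p)
    have hsv : Real.sqrt (1 - ((2 * x - (a + b)) / (b - a)) ^ 2) = 2 * q / (b - a) := by
      rw [show 1 - ((2 * x - (a + b)) / (b - a)) ^ 2 = (2 * q / (b - a)) ^ 2 by
        field_simp
        linear_combination (-4) * hq2]
      exact Real.sqrt_sq (by positivity)
    have hsu : Real.sqrt (1 - (((a + b) * x - 2 * (a * b)) / ((b - a) * x)) ^ 2)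
        = 2 * p * q / ((b - a) * x) := by
      rw [show 1 - (((a + b) * x - 2 * (a * b)) / ((b - a) * x)) ^ 2
          = (2 * p * q / ((b - a) * x)) ^ 2 by
        field_simp
        nlinarith [hq2, hp2]]
      exact Real.sqrt_sq (by positivity)
    have hval : (a + b - 2 * x) / (2 * q)
        + (a + b) / 2 * (1 / Real.sqrt (1 - ((2 * x - (a + b)) / (b - a)) ^ 2) * (2 / (b - a)))
        - p * (1 / Real.sqrt (1 - (((a + b) * x - 2 * (a * b)) / ((b - a) * x)) ^ 2)
          * (2 * (a * b) / ((b - a) * x ^ 2)))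
        = q / x := by
      rw [hsv, hsu]
      field_simp
      linear_combination (-2) * hq2
    rw [hF]
    exact hval ▸ H
  rw [intervalIntegral.integral_eq_sub_of_hasDerivAt_of_le hab.le hcont hderiv hint]
  have hva : (2 * a - (a + b)) / (b - a) = -1 := by
    rw [div_eq_iff hd.ne']; ring
  have hvb : (2 * b - (a + b)) / (b - a) = 1 := by
    rw [div_eq_iff hd.ne']; ring
  have hua : ((a + b) * a - 2 * (a * b)) / ((b - a) * a) = -1 := by
    rw [div_eq_iff (by positivity)]; ring
  have hub : ((a + b) * b - 2 * (a * b)) / ((b - a) * b) = 1 := by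
    rw [div_eq_iff (by positivity)]; ring
  rw [hF]
  simp only [hva, hvb, hua, hub, Real.arcsin_one, Real.arcsin_neg_one,
    sub_self, zero_mul, mul_zero, Real.sqrt_zero]
  ring

/-- The leading (Langer-corrected) WKB action integral for the radial Coulomb problem
`V(r) = -e²/r`: for `E < 0`, `e ≠ 0`, `0 < λ ≤ e²/√(-2E)`, with turning points
`r∓ = (e² ∓ √(e⁴ + 2Eλ²))/(-2E)`,
`∫_{r₋}^{r₊} √(2E + 2e²/r - λ²/r²) dr = π(e²/√(-2E) - λ)`. -/
theorem coulomb_action_integral (E e lam : ℝ) (hE : E < 0) (he : e ≠ 0)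
    (hlam : 0 < lam) (hlam' : lam ≤ e ^ 2 / Real.sqrt (-2 * E))
    (rm rp : ℝ)
    (hrm : rm = (e ^ 2 - Real.sqrt (e ^ 4 + 2 * E * lam ^ 2)) / (-2 * E))
    (hrp : rp = (e ^ 2 + Real.sqrt (e ^ 4 + 2 * E * lam ^ 2)) / (-2 * E)) :
    ∫ r in rm..rp, Real.sqrt (2 * E + 2 * e ^ 2 / r - lam ^ 2 / r ^ 2) =
      Real.pi * (e ^ 2 / Real.sqrt (-2 * E) - lam) := by
  have hE2 : (0:ℝ) < -2 * E := by linarith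
  have hEne : E ≠ 0 := ne_of_lt hE
  have he2 : (0:ℝ) < e ^ 2 := by positivity
  set t := Real.sqrt (-2 * E) with ht
  have htpos : 0 < t := Real.sqrt_pos.mpr hE2
  have ht2 : t ^ 2 = -2 * E := Real.sq_sqrt hE2.le
  have hlt' : lam * t ≤ e ^ 2 := by
    rw [le_div_iff₀ htpos] at hlam'
    exact hlam'
  have hdisc : 0 ≤ e ^ 4 + 2 * E * lam ^ 2 := by nlinarith [hlt', ht2, mul_pos hlam htpos]
  set D := Real.sqrt (e ^ 4 + 2 * E * lam ^ 2) with hD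
  have hDnn : 0 ≤ D := Real.sqrt_nonneg _
  have hD2 : D ^ 2 = e ^ 4 + 2 * E * lam ^ 2 := Real.sq_sqrt hdisc
  have hDlt : D < e ^ 2 := by nlinarith [hD2, hDnn, mul_pos hE2 (pow_pos hlam 2)]
  have hrm0 : 0 < rm := by rw [hrm]; apply div_pos (by linarith) hE2
  have hsum : (-2 * E) * (rm + rp) = 2 * e ^ 2 := by
    rw [hrm, hrp]; field_simp; ring
  have hprod : (-2 * E) * (rm * rp) = lam ^ 2 := by
    rw [hrm, hrp]; field_simp
    linear_combination hD2
  have hle : rm ≤ rp := by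
    rw [hrm, hrp]
    exact (div_le_div_iff_of_pos_right hE2).mpr (by linarith)
  rcases eq_or_lt_of_le hle with heq | hlt
  · rw [heq, intervalIntegral.integral_same]
    have hD0 : D = 0 := by
      rw [hrm, hrp] at heq
      field_simp at heq
      linarith
    have : e ^ 2 / t = lam := by
      have hz : (e ^ 2 - lam * t) * (e ^ 2 + lam * t) = 0 := by
        linear_combination (-lam ^ 2) * ht2 - hD2 + D * hD0
      rcases mul_eq_zero.mp hz with h | h
      · rw [div_eq_iff htpos.ne']; linarith
      · nlinarith [mul_pos hlam htpos]
    rw [this, sub_self, mul_zero]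
  · have hcong : Set.EqOn (fun x => Real.sqrt (2 * E + 2 * e ^ 2 / x - lam ^ 2 / x ^ 2))
        (fun x => t * (Real.sqrt ((x - rm) * (rp - x)) / x)) (Set.uIcc rm rp) := by
      intro x hx
      rw [Set.uIcc_of_le hle] at hx
      have hx0 : 0 < x := lt_of_lt_of_le hrm0 hx.1
      have hQnn : 0 ≤ (x - rm) * (rp - x) :=
        mul_nonneg (by linarith [hx.1]) (by linarith [hx.2])
      have key : 2 * E + 2 * e ^ 2 / x - lam ^ 2 / x ^ 2
          = t ^ 2 * ((x - rm) * (rp - x)) / x ^ 2 := by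
        rw [ht2]
        field_simp
        linear_combination hprod - x * hsum
      simp only
      rw [key, show t ^ 2 * ((x - rm) * (rp - x)) / x ^ 2
          = (t * (Real.sqrt ((x - rm) * (rp - x)) / x)) ^ 2 by
        rw [mul_pow, div_pow, Real.sq_sqrt hQnn]; ring,
        Real.sqrt_sq (by positivity)]
    rw [intervalIntegral.integral_congr hcong, intervalIntegral.integral_const_mul,
      sqrt_poly_integral rm rp hrm0 hlt]
    have hsq : Real.sqrt (rm * rp) = lam / t := by
      rw [show rm * rp = (lam / t) ^ 2 by
        rw [div_pow, ht2]
        field_simp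
        linear_combination -hprod]
      exact Real.sqrt_sq (by positivity)
    have hs2 : (rm + rp) / 2 = e ^ 2 / t ^ 2 := by
      rw [ht2]
      field_simp
      linarith [hsum]
    rw [hsq, hs2]
    field_simp
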